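/- Let A ⊆ ℕ be sublacunary and let S ⊆ ℝ/ℤ have 0 as a limit point (0 is in the closure of S \ {0}). Then A·S = { n·s : n ∈ A, s ∈ S } is dense in ℝ/ℤ. -/

import Mathlib

private lemma ac_add (p q : ℝ) : ((p + q : ℝ) : AddCircle (1:ℝ)) = (p : AddCircle (1:ℝ)) + q := rfl
private lemma ac_sub (p q : ℝ) : ((p - q : ℝ) : AddCircle (1:ℝ)) = (p : AddCircle (1:ℝ)) - q := rfl
private lemma ac_neg (p : ℝ) : ((-p : ℝ) : AddCircle (1:ℝ)) = -(p : AddCircle (1:ℝ)) := rfl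

/-- Key real lemma: a sequence with small multiplicative steps starting below `ε`
hits the interval `(t, t+ε)`. -/
lemma key_hit (f : ℕ → ℕ)
    (b t ε : ℝ) (hb : 0 < b) (ht0 : 0 ≤ t) (ht1 : t ≤ 1) (hε : 0 < ε)
    (K : ℕ) (hK : ∀ k, K ≤ k → ((f (k + 1) : ℝ)) < (1 + ε / 2) * f k)
    (hbK : (f K : ℝ) * b < ε) (hfk : ∀ k : ℕ, (k : ℝ) ≤ (f k : ℝ)) :
    ∃ k, t < (f k : ℝ) * b ∧ (f k : ℝ) * b < t + ε := by
  have hex : ∃ m, t < (f (K + m) : ℝ) * b := by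
    obtain ⟨m, hm⟩ := exists_nat_gt (t / b)
    refine ⟨m, ?_⟩
    have h1 : t / b < ((K + m : ℕ) : ℝ) := by push_cast; linarith [Nat.cast_nonneg (α := ℝ) K]
    have h2 := hfk (K + m)
    have h3 : t = (t / b) * b := by field_simp
    nlinarith
  classical
  set m := Nat.find hex with hm
  have hspec : t < (f (K + m) : ℝ) * b := Nat.find_spec hex
  refine ⟨K + m, hspec, ?_⟩
  rcases Nat.eq_zero_or_pos m with h0 | h0
  · rw [h0]
    simp only [Nat.add_zero]
    linarith
  · obtain ⟨j, hj⟩ := Nat.exists_eq_succ_of_ne_zero h0.ne'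
    have hprev : ¬ t < (f (K + j) : ℝ) * b := Nat.find_min hex (by omega)
    push_neg at hprev
    have hstep := hK (K + j) (by omega)
    have hfpos : (0:ℝ) ≤ (f (K + j) : ℝ) * b := by positivity
    have h4 : (f (K + j + 1) : ℝ) * b < (1 + ε / 2) * ((f (K + j) : ℝ) * b) := by
      nlinarith
    have hle : (1 + ε / 2) * ((f (K + j) : ℝ) * b) ≤ t + ε / 2 := by nlinarith
    have hj' : K + m = K + j + 1 := by omega
    rw [hj']
    linarith

/-- If `A ⊆ ℕ` is sublacunary and `0` is a limit point of `S ⊆ ℝ/ℤ`, then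
`A·S = { n • s : n ∈ A, s ∈ S }` is dense in `ℝ/ℤ`. -/
theorem stmt11 (A : Set ℕ) (hA : A.Infinite) (h0 : 0 ∉ A)
    (hsub : Filter.Tendsto
      (fun k => (Nat.nth (· ∈ A) (k + 1) : ℝ) / (Nat.nth (· ∈ A) k : ℝ))
      Filter.atTop (nhds 1))
    (S : Set (AddCircle (1 : ℝ)))
    (h0S : (0 : AddCircle (1 : ℝ)) ∈ closure (S \ {0})) :
    Dense {y : AddCircle (1 : ℝ) | ∃ n ∈ A, ∃ s ∈ S, y = n • s} := by
  have hAinf : (setOf (· ∈ A)).Infinite := hA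
  set f := Nat.nth (· ∈ A) with hf
  have hmem : ∀ k, f k ∈ A := fun k => Nat.nth_mem_of_infinite hAinf k
  have hmono : StrictMono f := Nat.nth_strictMono hAinf
  have hfpos : ∀ k, 1 ≤ f k := fun k => Nat.one_le_iff_ne_zero.mpr (fun h => h0 (h ▸ hmem k))
  have hfk : ∀ k : ℕ, (k : ℝ) ≤ (f k : ℝ) := fun k => by exact_mod_cast hmono.le_apply
  rw [Metric.dense_iff]
  intro y ε hε
  -- get K from sublacunarity
  have hev : ∀ᶠ k in Filter.atTop,
      ((f (k + 1) : ℝ)) / (f k : ℝ) < 1 + ε / 2 :=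
    hsub.eventually (Filter.Tendsto.eventually_lt_const (by linarith) Filter.tendsto_id)
  obtain ⟨K, hK⟩ := hev.exists_forall_of_atTop
  have hK' : ∀ k, K ≤ k → ((f (k + 1) : ℝ)) < (1 + ε / 2) * f k := by
    intro k hk
    have hfK : (0:ℝ) < f k := by exact_mod_cast hfpos k
    have h := hK k hk
    rw [div_lt_iff₀ hfK] at h
    linarith
  -- choose s ∈ S close to 0
  have hfKpos : (0:ℝ) < (f K : ℝ) := by exact_mod_cast hfpos K
  have hδ : 0 < ε / (f K : ℝ) := by positivity
  obtain ⟨s, hsS, hs⟩ := Metric.mem_closure_iff.mp h0S _ hδ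
  obtain ⟨hsS', hs0⟩ := hsS
  have hs0' : s ≠ 0 := hs0
  have hns : ‖s‖ < ε / (f K : ℝ) := by
    rwa [dist_comm, dist_zero_right] at hs
  -- lift s to a real number `a` with `|a| = ‖s‖`
  obtain ⟨x, hx⟩ := QuotientAddGroup.mk_surjective s
  set a : ℝ := x - round x with ha
  have hax : (a : AddCircle (1:ℝ)) = s := by
    have h1 : ((round x : ℝ) : AddCircle (1:ℝ)) = 0 :=
      (AddCircle.coe_eq_zero_iff (1:ℝ)).mpr ⟨round x, by simp⟩
    rw [ha, ac_sub, h1, sub_zero, hx]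
  have hnorm : ‖s‖ = |a| := by
    rw [← hx, AddCircle.norm_eq]; norm_num; rfl
  have hane : a ≠ 0 := by
    intro h
    apply hs0'
    rw [← hax, h]; simp
  have hbpos : 0 < |a| := abs_pos.mpr hane
  have habδ : |a| < ε / (f K : ℝ) := hnorm ▸ hns
  have hblt : (f K : ℝ) * |a| < ε := by
    calc (f K : ℝ) * |a| < (f K : ℝ) * (ε / (f K : ℝ)) := (mul_lt_mul_iff_right₀ hfKpos).mpr habδ
    _ = ε := by field_simp
  -- target lift
  set c : AddCircle (1:ℝ) := if 0 < a then y else -y with hc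
  obtain ⟨u, hu⟩ := QuotientAddGroup.mk_surjective c
  set t : ℝ := Int.fract u with htdef
  have htc : (t : AddCircle (1:ℝ)) = c := by
    have h1 : ((Int.floor u : ℝ) : AddCircle (1:ℝ)) = 0 :=
      (AddCircle.coe_eq_zero_iff (1:ℝ)).mpr ⟨⌊u⌋, by simp⟩
    have h2 : t = u - (⌊u⌋ : ℝ) := rfl
    rw [h2, ac_sub, h1, sub_zero, hu]
  have ht0 : 0 ≤ t := Int.fract_nonneg u
  have ht1 : t ≤ 1 := (Int.fract_lt_one u).le
  -- apply key lemma
  obtain ⟨k, hk1, hk2⟩ := key_hit f |a| t ε hbpos ht0 ht1 hε K hK' hblt hfk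
  refine ⟨f k • s, ?_, f k, hmem k, s, hsS', rfl⟩
  rw [Metric.mem_ball, dist_eq_norm]
  have hsmul : (f k) • s = (((f k : ℝ) * a : ℝ) : AddCircle (1:ℝ)) := by
    rw [← hax, ← nsmul_eq_mul]; rfl
  have hkey : ∀ r : ℝ, ‖(r : AddCircle (1:ℝ))‖ ≤ |r| := fun r => by
    simpa using QuotientAddGroup.norm_mk_le_norm (S := AddSubgroup.zmultiples (1:ℝ)) (m := r)
  rcases lt_or_gt_of_ne hane with hneg | hpos
  · -- a < 0
    rw [abs_of_neg hneg] at hk1 hk2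
    have hyt : y = -(t : AddCircle (1:ℝ)) := by
      rw [htc, hc, if_neg (by linarith)]; simp
    have he : (f k) • s - y = -((((f k : ℝ) * (-a) - t : ℝ)) : AddCircle (1:ℝ)) := by
      rw [hsmul, hyt, sub_neg_eq_add]
      have h3 : ((f k : ℝ) * (-a) - t : ℝ) = -((f k : ℝ) * a + t) := by ring
      rw [h3, ac_neg, ac_add, neg_neg]
    rw [he, norm_neg]
    refine lt_of_le_of_lt (hkey _) ?_
    rw [abs_lt]; constructor <;> linarith
  · -- a > 0
    rw [abs_of_pos hpos] at hk1 hk2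
    have hyt : y = (t : AddCircle (1:ℝ)) := by rw [htc, hc, if_pos hpos]
    have he : (f k) • s - y = ((((f k : ℝ) * a - t : ℝ)) : AddCircle (1:ℝ)) := by
      rw [hsmul, hyt, ac_sub]
    rw [he]
    refine lt_of_le_of_lt (hkey _) ?_
    rw [abs_lt]; constructor <;> linarith
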